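/- Let (β_n)_{n≥1} be a real sequence with |β_{n+1}| ≤ |β_n| for all n, |β_n| → 0, and such that for each integer k ≥ 1 exactly one of β_{2k−1}, β_{2k} is positive and the other is negative. Then Σ_{n=1}^∞ β_n converges, |Σ_{n=1}^∞ β_n| ≤ |β_1|, and for every interval of integers [a, b] with 1 ≤ a ≤ b, |Σ_{n=a}^{b} β_n| ≤ 2|β_1|. -/

import Mathlib

open Filter Topology

section NearAltAux

variable (β : ℕ → ℝ)

private lemma na_anti (hmono : ∀ n, 1 ≤ n → |β (n + 1)| ≤ |β n|) :
    ∀ m n, 1 ≤ m → m ≤ n → |β n| ≤ |β m| := by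
  intro m n h1 h2
  obtain ⟨k, rfl⟩ := Nat.exists_eq_add_of_le h2
  clear h2
  induction k with
  | zero => simp
  | succ j ih => exact le_trans (hmono (m + j) (by omega)) ih

private lemma na_max_le (hmono : ∀ n, 1 ≤ n → |β (n + 1)| ≤ |β n|) (j : ℕ) :
    max (β (2*j+1)) (β (2*j+2)) ≤ |β (2*j+1)| :=
  max_le (le_abs_self _) ((le_abs_self _).trans (hmono (2*j+1) (by omega)))

private lemma na_min_ge (hmono : ∀ n, 1 ≤ n → |β (n + 1)| ≤ |β n|) (j : ℕ) :
    -|β (2*j+1)| ≤ min (β (2*j+1)) (β (2*j+2)) :=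
  le_min (neg_abs_le _) (le_trans (neg_le_neg (hmono (2*j+1) (by omega))) (neg_abs_le _))

private lemma na_halt' (halt : ∀ k, 1 ≤ k →
      (0 < β (2 * k - 1) ∧ β (2 * k) < 0) ∨ (β (2 * k - 1) < 0 ∧ 0 < β (2 * k)))
    (j : ℕ) :
    (0 < β (2*j+1) ∧ β (2*j+2) < 0) ∨ (β (2*j+1) < 0 ∧ 0 < β (2*j+2)) := by
  have h := halt (j+1) (by omega)
  have e1 : 2 * (j+1) - 1 = 2*j+1 := by omega
  have e2 : 2 * (j+1) = 2*j+2 := by omega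
  rwa [e1, e2] at h

private lemma na_max_ge (hmono : ∀ n, 1 ≤ n → |β (n + 1)| ≤ |β n|)
    (halt : ∀ k, 1 ≤ k →
      (0 < β (2 * k - 1) ∧ β (2 * k) < 0) ∨ (β (2 * k - 1) < 0 ∧ 0 < β (2 * k)))
    (j : ℕ) : |β (2*j+2)| ≤ max (β (2*j+1)) (β (2*j+2)) := by
  rcases na_halt' β halt j with ⟨h1, h2⟩ | ⟨h1, h2⟩
  · calc |β (2*j+2)| ≤ |β (2*j+1)| := hmono (2*j+1) (by omega)
      _ = β (2*j+1) := abs_of_pos h1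
      _ ≤ _ := le_max_left _ _
  · calc |β (2*j+2)| = β (2*j+2) := abs_of_pos h2
      _ ≤ _ := le_max_right _ _

private lemma na_min_le (hmono : ∀ n, 1 ≤ n → |β (n + 1)| ≤ |β n|)
    (halt : ∀ k, 1 ≤ k →
      (0 < β (2 * k - 1) ∧ β (2 * k) < 0) ∨ (β (2 * k - 1) < 0 ∧ 0 < β (2 * k)))
    (j : ℕ) : min (β (2*j+1)) (β (2*j+2)) ≤ -|β (2*j+2)| := by
  rcases na_halt' β halt j with ⟨h1, h2⟩ | ⟨h1, h2⟩
  · calc min (β (2*j+1)) (β (2*j+2)) ≤ β (2*j+2) := min_le_right _ _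
      _ = -|β (2*j+2)| := by rw [abs_of_neg h2]; ring
  · calc min (β (2*j+1)) (β (2*j+2)) ≤ β (2*j+1) := min_le_left _ _
      _ = -|β (2*j+1)| := by rw [abs_of_neg h1]; ring
      _ ≤ -|β (2*j+2)| := neg_le_neg (hmono (2*j+1) (by omega))

/-- Invariant for even-ended partial sums starting at an odd index. -/
private lemma na_invariant (hmono : ∀ n, 1 ≤ n → |β (n + 1)| ≤ |β n|)
    (halt : ∀ k, 1 ≤ k →
      (0 < β (2 * k - 1) ∧ β (2 * k) < 0) ∨ (β (2 * k - 1) < 0 ∧ 0 < β (2 * k)))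
    (i : ℕ) : ∀ k : ℕ,
    (∑ n ∈ Finset.Icc (2*i+1) (2*(i+k)+2), β n)
        ≤ |β (2*i+1)| + min (β (2*(i+k)+1)) (β (2*(i+k)+2)) ∧
    -|β (2*i+1)| + max (β (2*(i+k)+1)) (β (2*(i+k)+2))
        ≤ ∑ n ∈ Finset.Icc (2*i+1) (2*(i+k)+2), β n := by
  intro k
  induction k with
  | zero =>
    have hs : ∑ n ∈ Finset.Icc (2*i+1) (2*(i+0)+2), β n = β (2*i+1) + β (2*i+2) := by
      have e : 2*(i+0)+2 = (2*i+1) + 1 := by omega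
      rw [e, Finset.sum_Icc_succ_top (by omega), Finset.Icc_self, Finset.sum_singleton]
    have hmm : β (2*i+1) + β (2*i+2) = max (β (2*i+1)) (β (2*i+2)) + min (β (2*i+1)) (β (2*i+2)) :=
      (max_add_min _ _).symm
    constructor
    · rw [hs, hmm, show i + 0 = i from rfl]
      linarith [na_max_le β hmono i]
    · rw [hs, hmm, show i + 0 = i from rfl]
      linarith [na_min_ge β hmono i]
  | succ k ih =>
    set K := i + k with hK
    have e1 : 2*(i+(k+1))+2 = (2*K+3) + 1 := by omega
    have e2 : 2*K+3 = (2*K+2) + 1 := by omega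
    have e3 : 2*(i+(k+1))+1 = 2*(K+1)+1 := by omega
    have e4 : 2*(i+(k+1))+2 = 2*(K+1)+2 := by omega
    have e5 : 2*K+2 = 2*(i+k)+2 := by omega
    have hs : ∑ n ∈ Finset.Icc (2*i+1) (2*(i+(k+1))+2), β n
        = (∑ n ∈ Finset.Icc (2*i+1) (2*K+2), β n) + β (2*K+3) + β (2*K+4) := by
      rw [e1, Finset.sum_Icc_succ_top (by omega), e2, Finset.sum_Icc_succ_top (by omega)]
    have hmm : β (2*K+3) + β (2*K+4)
        = max (β (2*(K+1)+1)) (β (2*(K+1)+2)) + min (β (2*(K+1)+1)) (β (2*(K+1)+2)) := by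
      rw [show 2*(K+1)+1 = 2*K+3 from by omega, show 2*(K+1)+2 = 2*K+4 from by omega]
      exact (max_add_min _ _).symm
    -- bridging inequalities
    have hb1 : max (β (2*(K+1)+1)) (β (2*(K+1)+2)) ≤ -min (β (2*K+1)) (β (2*K+2)) := by
      calc max (β (2*(K+1)+1)) (β (2*(K+1)+2)) ≤ |β (2*(K+1)+1)| := na_max_le β hmono (K+1)
        _ = |β ((2*K+2)+1)| := by rw [show 2*(K+1)+1 = (2*K+2)+1 from by omega]
        _ ≤ |β (2*K+2)| := hmono (2*K+2) (by omega)
        _ ≤ -min (β (2*K+1)) (β (2*K+2)) := by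
            have := na_min_le β hmono halt K
            linarith
    have hb2 : -min (β (2*(K+1)+1)) (β (2*(K+1)+2)) ≤ max (β (2*K+1)) (β (2*K+2)) := by
      calc -min (β (2*(K+1)+1)) (β (2*(K+1)+2)) ≤ |β (2*(K+1)+1)| := by
            have := na_min_ge β hmono (K+1); linarith
        _ = |β ((2*K+2)+1)| := by rw [show 2*(K+1)+1 = (2*K+2)+1 from by omega]
        _ ≤ |β (2*K+2)| := hmono (2*K+2) (by omega)
        _ ≤ max (β (2*K+1)) (β (2*K+2)) := na_max_ge β hmono halt K
    obtain ⟨ihu, ihl⟩ := ih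
    rw [show 2*(i+k)+1 = 2*K+1 from by omega, show 2*(i+k)+2 = 2*K+2 from by omega] at ihu ihl
    constructor
    · rw [hs, e3, e4]
      linarith
    · rw [hs, e3, e4]
      linarith

/-- Key bound: a sum starting at an odd index is bounded by the first term. -/
private lemma na_key (hmono : ∀ n, 1 ≤ n → |β (n + 1)| ≤ |β n|)
    (halt : ∀ k, 1 ≤ k →
      (0 < β (2 * k - 1) ∧ β (2 * k) < 0) ∨ (β (2 * k - 1) < 0 ∧ 0 < β (2 * k)))
    (i : ℕ) (N : ℕ) : |∑ n ∈ Finset.Icc (2*i+1) N, β n| ≤ |β (2*i+1)| := by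
  rcases lt_or_ge N (2*i+1) with hN | hN
  · rw [Finset.Icc_eq_empty (by omega), Finset.sum_empty, abs_zero]
    exact abs_nonneg _
  rcases eq_or_lt_of_le hN with hN' | hN'
  · rw [← hN', Finset.Icc_self, Finset.sum_singleton]
  -- N ≥ 2i+2
  have hN2 : 2*i+2 ≤ N := by omega
  rcases Nat.even_or_odd N with ⟨m, hm⟩ | ⟨m, hm⟩
  · -- N = 2m, m ≥ i+1; N = 2*(i+k)+2 with k = m - i - 1
    obtain ⟨k, hk⟩ : ∃ k, N = 2*(i+k)+2 := ⟨m - i - 1, by omega⟩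
    subst hk
    obtain ⟨hu, hl⟩ := na_invariant β hmono halt i k
    have h1 : min (β (2*(i+k)+1)) (β (2*(i+k)+2)) ≤ 0 :=
      le_trans (na_min_le β hmono halt (i+k)) (neg_nonpos.mpr (abs_nonneg _))
    have h2 : (0:ℝ) ≤ max (β (2*(i+k)+1)) (β (2*(i+k)+2)) :=
      le_trans (abs_nonneg _) (na_max_ge β hmono halt (i+k))
    rw [abs_le]; constructor <;> linarith
  · -- N = 2m+1, m ≥ i+1; N = 2*(i+k)+3 with k = m - i - 1
    obtain ⟨k, hk⟩ : ∃ k, N = 2*(i+k)+3 := ⟨m - i - 1, by omega⟩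
    subst hk
    set K := i + k with hK
    have hs : ∑ n ∈ Finset.Icc (2*i+1) (2*K+3), β n
        = (∑ n ∈ Finset.Icc (2*i+1) (2*K+2), β n) + β (2*K+3) := by
      rw [show 2*K+3 = (2*K+2)+1 from by omega, Finset.sum_Icc_succ_top (by omega)]
    obtain ⟨hu, hl⟩ := na_invariant β hmono halt i k
    rw [show 2*(i+k)+1 = 2*K+1 from rfl, show 2*(i+k)+2 = 2*K+2 from rfl] at hu hl
    have habs : |β (2*K+3)| ≤ |β (2*K+2)| := by
      have := hmono (2*K+2) (by omega)
      rwa [show (2*K+2)+1 = 2*K+3 from by omega] at this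
    have h1 : min (β (2*K+1)) (β (2*K+2)) + β (2*K+3) ≤ 0 := by
      have := na_min_le β hmono halt K
      have h3 : β (2*K+3) ≤ |β (2*K+3)| := le_abs_self _
      linarith
    have h2 : (0:ℝ) ≤ max (β (2*K+1)) (β (2*K+2)) + β (2*K+3) := by
      have := na_max_ge β hmono halt K
      have h3 : -|β (2*K+3)| ≤ β (2*K+3) := neg_abs_le _
      linarith
    rw [hs, abs_le]; constructor <;> linarith

/-- Tail bound: sums starting at index `a ≥ 2` are bounded by `2|β (a-1)|`. -/
private lemma na_tail (hmono : ∀ n, 1 ≤ n → |β (n + 1)| ≤ |β n|)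
    (halt : ∀ k, 1 ≤ k →
      (0 < β (2 * k - 1) ∧ β (2 * k) < 0) ∨ (β (2 * k - 1) < 0 ∧ 0 < β (2 * k)))
    (a b : ℕ) (ha : 2 ≤ a) : |∑ n ∈ Finset.Icc a b, β n| ≤ 2 * |β (a-1)| := by
  rcases Nat.even_or_odd a with ⟨m, hm⟩ | ⟨m, hm⟩
  · -- a even, a = 2m = 2(m-1)+2, a-1 = 2(m-1)+1
    obtain ⟨i, hi⟩ : ∃ i, a = 2*i+2 := ⟨m - 1, by omega⟩
    have hi1 : a - 1 = 2*i+1 := by omega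
    rcases lt_or_ge b a with hb | hb
    · rw [Finset.Icc_eq_empty (by omega), Finset.sum_empty, abs_zero]
      positivity
    · have hsplit : ∑ n ∈ Finset.Icc (2*i+1) b, β n
          = β (2*i+1) + ∑ n ∈ Finset.Icc a b, β n := by
        have : Finset.Icc (2*i+1) b = insert (2*i+1) (Finset.Icc a b) := by
          ext x; simp [Finset.mem_Icc, Finset.mem_insert]; omega
        rw [this, Finset.sum_insert (by simp [Finset.mem_Icc]; omega)]
      have hk := na_key β hmono halt i b
      rw [hi1]
      have : ∑ n ∈ Finset.Icc a b, β n = (∑ n ∈ Finset.Icc (2*i+1) b, β n) - β (2*i+1) := by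
        rw [hsplit]; ring
      rw [this]
      calc |(∑ n ∈ Finset.Icc (2*i+1) b, β n) - β (2*i+1)|
          ≤ |∑ n ∈ Finset.Icc (2*i+1) b, β n| + |β (2*i+1)| := abs_sub _ _
        _ ≤ |β (2*i+1)| + |β (2*i+1)| := by linarith
        _ = 2 * |β (2*i+1)| := by ring
  · -- a odd, a = 2m+1, m ≥ 1
    have hi : a = 2*m+1 := by omega
    subst hi
    have hk := na_key β hmono halt m b
    have h2 : |β (2*m+1)| ≤ |β (2*m+1-1)| := by
      have := hmono (2*m) (by omega)
      have e : 2*m+1-1 = 2*m := by omega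
      rw [e]
      rwa [show 2*m+1 = (2*m)+1 from rfl]
    have h3 : (0:ℝ) ≤ |β (2*m+1-1)| := abs_nonneg _
    linarith

end NearAltAux

/-- **Lemma 4.12.** If `(β_n)_{n≥1}` has nonincreasing absolute values tending to `0`
and each pair `(β_{2k−1}, β_{2k})` contains exactly one positive and one negative term,
then `Σ β_n` converges with `|Σ β_n| ≤ |β_1|`, and every block sum satisfies
`|Σ_{n=a}^b β_n| ≤ 2|β_1|`. -/
theorem near_alternating_sum_bounds (β : ℕ → ℝ)
    (hmono : ∀ n, 1 ≤ n → |β (n + 1)| ≤ |β n|)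
    (hlim : Tendsto (fun n => |β n|) atTop (𝓝 0))
    (halt : ∀ k, 1 ≤ k →
      (0 < β (2 * k - 1) ∧ β (2 * k) < 0) ∨ (β (2 * k - 1) < 0 ∧ 0 < β (2 * k))) :
    (∃ S : ℝ, Tendsto (fun N => ∑ n ∈ Finset.Icc 1 N, β n) atTop (𝓝 S) ∧ |S| ≤ |β 1|) ∧
    ∀ a b : ℕ, 1 ≤ a → a ≤ b → |∑ n ∈ Finset.Icc a b, β n| ≤ 2 * |β 1| := by
  have hanti := na_anti β hmono
  have hpartial : ∀ N, |∑ n ∈ Finset.Icc 1 N, β n| ≤ |β 1| := by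
    intro N
    have := na_key β hmono halt 0 N
    simpa using this
  constructor
  · -- convergence
    have hcauchy : CauchySeq (fun N => ∑ n ∈ Finset.Icc 1 N, β n) := by
      rw [Metric.cauchySeq_iff']
      intro ε hε
      obtain ⟨N₀, hN₀⟩ := (Metric.tendsto_atTop.mp hlim) (ε/2) (by linarith)
      refine ⟨max N₀ 1, ?_⟩
      intro n hn
      have h1 : 1 ≤ max N₀ 1 := le_max_right _ _
      have hS : ∑ n ∈ Finset.Icc 1 n, β n
          = (∑ k ∈ Finset.Icc 1 (max N₀ 1), β k) + ∑ k ∈ Finset.Icc (max N₀ 1 + 1) n, β k := by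
        rw [show Finset.Icc 1 = Finset.Ioc 0 from funext (Finset.Icc_add_one_left_eq_Ioc 0), Finset.Icc_add_one_left_eq_Ioc]
        exact (Finset.sum_Ioc_consecutive β (by omega) hn).symm
      rw [Real.dist_eq, hS]
      have : (∑ k ∈ Finset.Icc 1 (max N₀ 1), β k) + (∑ k ∈ Finset.Icc (max N₀ 1 + 1) n, β k)
          - ∑ n ∈ Finset.Icc 1 (max N₀ 1), β n = ∑ k ∈ Finset.Icc (max N₀ 1 + 1) n, β k := by ring
      rw [this]
      have htail := na_tail β hmono halt (max N₀ 1 + 1) n (by omega)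
      have e : max N₀ 1 + 1 - 1 = max N₀ 1 := by omega
      rw [e] at htail
      have hsmall : |β (max N₀ 1)| < ε/2 := by
        have := hN₀ (max N₀ 1) (le_max_left _ _)
        rwa [Real.dist_eq, sub_zero, abs_abs] at this
      linarith
    obtain ⟨S, hS⟩ := cauchySeq_tendsto_of_complete hcauchy
    refine ⟨S, hS, ?_⟩
    have habs : Tendsto (fun N => |∑ n ∈ Finset.Icc 1 N, β n|) atTop (𝓝 |S|) := hS.abs
    exact le_of_tendsto habs (Filter.Eventually.of_forall hpartial)
  · -- block bounds
    intro a b ha hab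
    rcases eq_or_lt_of_le ha with h1 | h1
    · subst h1
      linarith [hpartial b, abs_nonneg (β 1)]
    · have htail := na_tail β hmono halt a b (by omega)
      have h2 : |β (a-1)| ≤ |β 1| := hanti 1 (a-1) le_rfl (by omega)
      linarith
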